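/- Let R be a nontrivial commutative ring with identity and let X₁, X₂, ... be a countably infinite set of indeterminates over R. Then the power series ring R[[X₁, X₂, ...]] in countably many variables is not a weakly Laskerian ring. -/

import Mathlib

/-- An `R`-module `M` is *weakly Laskerian* if every quotient of `M` has only finitely many
associated prime ideals. -/
def IsWeaklyLaskerian (R : Type*) [CommRing R] (M : Type*) [AddCommGroup M]
    [Module R M] : Prop :=
  ∀ N : Submodule R M, (associatedPrimes R (M ⧸ N)).Finite

namespace WLAux

open MvPowerSeries Finsupp

variable {R : Type*} [CommRing R]

/-- The ideal of power series all of whose "pure `X i` power" coefficients lie in `p`. -/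
noncomputable def P (p : Ideal R) (i : ℕ) : Ideal (MvPowerSeries ℕ R) where
  carrier := {f | ∀ n : ℕ, MvPowerSeries.coeff (single i n) f ∈ p}
  add_mem' hf hg n := by rw [map_add]; exact p.add_mem (hf n) (hg n)
  zero_mem' n := by simp
  smul_mem' g f hf := by
    intro n
    classical
    rw [smul_eq_mul, MvPowerSeries.coeff_mul, Finsupp.antidiagonal_single, Finset.sum_map]
    refine Ideal.sum_mem p fun q _ => p.mul_mem_left _ (hf q.2)

lemma mem_P {p : Ideal R} {i : ℕ} {f : MvPowerSeries ℕ R} :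
    f ∈ P p i ↔ ∀ n : ℕ, MvPowerSeries.coeff (single i n) f ∈ p := Iff.rfl

lemma coeff_single_mul (i N : ℕ) (f g : MvPowerSeries ℕ R) :
    MvPowerSeries.coeff (single i N) (f * g) =
      ∑ q ∈ Finset.HasAntidiagonal.antidiagonal N,
        MvPowerSeries.coeff (single i q.1) f * MvPowerSeries.coeff (single i q.2) g := by
  classical
  rw [MvPowerSeries.coeff_mul, Finsupp.antidiagonal_single, Finset.sum_map]
  rfl

lemma P_isPrime (p : Ideal R) (hp : p.IsPrime) (i : ℕ) : (P p i).IsPrime := by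
  classical
  constructor
  · intro h
    have h1 : (1 : MvPowerSeries ℕ R) ∈ P p i := h ▸ Submodule.mem_top
    have := h1 0
    rw [Finsupp.single_zero, MvPowerSeries.coeff_zero_one] at this
    exact hp.ne_top (p.eq_top_of_isUnit_mem this isUnit_one)
  · intro f g hfg
    by_contra hc
    push_neg at hc
    obtain ⟨hf, hg⟩ := hc
    rw [mem_P] at hf hg
    push_neg at hf hg
    set n₀ := Nat.find hf with hn₀
    set m₀ := Nat.find hg with hm₀
    have hfn : MvPowerSeries.coeff (single i n₀) f ∉ p := Nat.find_spec hf
    have hgm : MvPowerSeries.coeff (single i m₀) g ∉ p := Nat.find_spec hg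
    have hsum := hfg (n₀ + m₀)
    rw [coeff_single_mul] at hsum
    have hmem : ((n₀, m₀) : ℕ × ℕ) ∈ Finset.HasAntidiagonal.antidiagonal (n₀ + m₀) := by simp
    rw [← Finset.add_sum_erase _ _ hmem] at hsum
    have hrest : ∑ q ∈ (Finset.HasAntidiagonal.antidiagonal (n₀ + m₀)).erase (n₀, m₀),
        MvPowerSeries.coeff (single i q.1) f * MvPowerSeries.coeff (single i q.2) g ∈ p := by
      refine Ideal.sum_mem p fun q hq => ?_
      obtain ⟨hne, hq⟩ := Finset.mem_erase.mp hq
      rw [Finset.HasAntidiagonal.mem_antidiagonal] at hq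
      rcases lt_or_ge q.1 n₀ with h | h
      · exact p.mul_mem_right _ (not_not.mp (Nat.find_min hf h))
      · have hq2 : q.2 < m₀ := by
          rcases lt_or_ge q.2 m₀ with h2 | h2
          · exact h2
          · exfalso
            have h1 : q.1 = n₀ := by omega
            have h2' : q.2 = m₀ := by omega
            exact hne (Prod.ext h1 h2')
        exact p.mul_mem_left _ (not_not.mp (Nat.find_min hg hq2))
    have hterm : MvPowerSeries.coeff (single i n₀) f *
        MvPowerSeries.coeff (single i m₀) g ∈ p :=
      (Submodule.add_mem_iff_left _ hrest).mp hsum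
    rcases hp.mem_or_mem hterm with h | h
    · exact hfn h
    · exact hgm h

lemma X_mem_P_iff (p : Ideal R) (hp : p.IsPrime) (i j : ℕ) :
    MvPowerSeries.X j ∈ P p i ↔ i ≠ j := by
  constructor
  · rintro h rfl
    have := h 1
    rw [MvPowerSeries.X_def, MvPowerSeries.coeff_monomial_same] at this
    exact hp.ne_top (p.eq_top_of_isUnit_mem this isUnit_one)
  · intro hij n
    rw [MvPowerSeries.X_def, MvPowerSeries.coeff_monomial_ne]
    · exact p.zero_mem
    · intro h
      have := DFunLike.congr_fun h j
      rw [Finsupp.single_eq_same, Finsupp.single_apply, if_neg hij] at this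
      exact one_ne_zero this.symm

lemma mul_X_mem_P_iff (p : Ideal R) (i : ℕ) (f : MvPowerSeries ℕ R) :
    (∀ j, f * MvPowerSeries.X i ∈ P p j) ↔ f ∈ P p i := by
  classical
  constructor
  · intro h n
    have := h i (n + 1)
    rw [MvPowerSeries.X_def, MvPowerSeries.coeff_mul_monomial,
      if_pos (Finsupp.single_le_single.mpr (by omega)), mul_one] at this
    rwa [← Finsupp.single_tsub, Nat.add_sub_cancel] at this
  · intro h j n
    rw [MvPowerSeries.X_def, MvPowerSeries.coeff_mul_monomial]
    split_ifs with hle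
    · have hji : j = i ∧ 1 ≤ n := by
        have := Finsupp.single_le_iff.mp hle
        rw [Finsupp.single_apply] at this
        by_cases hij : j = i
        · subst hij; simpa using this
        · rw [if_neg hij] at this; omega
      obtain ⟨rfl, hn⟩ := hji
      rw [← Finsupp.single_tsub, mul_one]
      exact h (n - 1)
    · simp

end WLAux

/-- For any nontrivial commutative ring `R`, the power series ring `R[[X₁, X₂, ...]]` in
countably many indeterminates over `R` is not a weakly Laskerian ring. -/
theorem mvPowerSeries_not_weaklyLaskerian {R : Type*} [CommRing R] [Nontrivial R] :
    ¬ IsWeaklyLaskerian (MvPowerSeries ℕ R) (MvPowerSeries ℕ R) := by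
  classical
  obtain ⟨p, hp⟩ := Ideal.exists_maximal R
  have hpp : p.IsPrime := hp.isPrime
  intro h
  set S := MvPowerSeries ℕ R
  set N : Submodule S S := (⨅ j, WLAux.P p j : Ideal S) with hN
  refine (h N).not_infinite ?_
  refine Set.infinite_of_injective_forall_mem (f := fun i : ℕ => WLAux.P p i) ?_ ?_
  · intro i j hij
    by_contra hne
    have hij' : WLAux.P p i = WLAux.P p j := hij
    have h1 : MvPowerSeries.X (σ := ℕ) (R := R) j ∈ WLAux.P p i :=
      (WLAux.X_mem_P_iff p hpp i j).mpr hne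
    rw [hij'] at h1
    exact (WLAux.X_mem_P_iff p hpp j j).mp h1 rfl
  · intro i
    refine ⟨WLAux.P_isPrime p hpp i, Submodule.Quotient.mk (MvPowerSeries.X i), ?_⟩
    have hcol : ((⊥ : Submodule S (S ⧸ N)).colon {Submodule.Quotient.mk (MvPowerSeries.X i)})
        = WLAux.P p i := by
      ext f
      rw [Submodule.mem_colon_singleton, Submodule.mem_bot, ← Submodule.Quotient.mk_smul,
        Submodule.Quotient.mk_eq_zero, smul_eq_mul, hN]
      rw [show ((⨅ j, WLAux.P p j : Ideal S) : Submodule S S) = ⨅ j, (WLAux.P p j : Submodule S S)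
        from rfl, Submodule.mem_iInf]
      exact (WLAux.mul_X_mem_P_iff p i f)
    rw [hcol, (WLAux.P_isPrime p hpp i).radical]
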